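/- arXiv:1412.1110 — 2 statements merged into one kernel-verified Lean document; each statement's English description precedes it below -/
import Mathlib

section
/- For all integers m, n, r ≥ 0, in ℤ[q]: B_q^{(r)}(m+n) = Σ_{i=0}^{n} Σ_{j=0}^{m} q^{i(j+r)} · ([j+r]_q)^{n-i} · C(n,i) · S_q^{(r)}(m,j) · B_q(i), where C(n,i) is the ordinary binomial coefficient. -/
open Finset Polynomial

/-- The q-integer [n]_q = 1 + q + ⋯ + q^{n-1} in ℤ[q]. -/
noncomputable def qint (n : ℕ) : Polynomial ℤ := ∑ i ∈ range n, X ^ i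

/-- q-Stirling numbers of the second kind (natural-number index version). -/
noncomputable def qStirling2Nat : ℕ → ℕ → Polynomial ℤ
  | 0, 0 => 1
  | 0, _ + 1 => 0
  | _ + 1, 0 => 0
  | n + 1, k + 1 => X ^ k * qStirling2Nat n k + qint (k + 1) * qStirling2Nat n (k + 1)

/-- q-Stirling numbers of the second kind, vanishing for negative second index. -/
noncomputable def qStirling2 (n : ℕ) (k : ℤ) : Polynomial ℤ :=
  if 0 ≤ k then qStirling2Nat n k.toNat else 0

/-- The q-Bell numbers. -/
noncomputable def qBell (n : ℕ) : Polynomial ℤ :=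
  ∑ k ∈ range (n + 1), qStirling2 n (k : ℤ)

/-- q-r-Stirling numbers of the second kind. -/
noncomputable def qrStirling2 (r n : ℕ) (k : ℤ) : Polynomial ℤ :=
  ∑ i ∈ range (n + 1), X ^ (i * r) * (qint r) ^ (n - i) * (n.choose i : Polynomial ℤ) *
    qStirling2 i k

/-- The q-r-Bell numbers. -/
noncomputable def qrBell (r n : ℕ) : Polynomial ℤ :=
  ∑ k ∈ range (n + 1), qrStirling2 r n (k : ℤ)

lemma qStirling2Nat_eq_zero : ∀ {n k : ℕ}, n < k → qStirling2Nat n k = 0 := by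
  intro n
  induction n with
  | zero => intro k h; cases k with
    | zero => omega
    | succ k => rfl
  | succ n ih =>
    intro k h
    cases k with
    | zero => omega
    | succ k =>
      show X ^ k * qStirling2Nat n k + qint (k + 1) * qStirling2Nat n (k + 1) = 0
      rw [ih (by omega), ih (by omega)]
      ring

lemma qStirling2_eq_zero_of_neg {n : ℕ} {k : ℤ} (h : k < 0) : qStirling2 n k = 0 := by
  simp [qStirling2, not_le.mpr h]

lemma qStirling2_eq_zero_of_gt {n : ℕ} {k : ℤ} (h : (n:ℤ) < k) : qStirling2 n k = 0 := by
  unfold qStirling2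
  split
  · exact qStirling2Nat_eq_zero (by omega)
  · rfl

lemma qint_add (a b : ℕ) : qint (a + b) = qint a + X ^ a * qint b := by
  simp [qint, Finset.sum_range_add, Finset.mul_sum, pow_add]

lemma qS_rec (n : ℕ) (k : ℤ) :
    qStirling2 (n+1) k =
      X ^ (k-1).toNat * qStirling2 n (k-1) + qint k.toNat * qStirling2 n k := by
  rcases lt_trichotomy k 0 with h | h | h
  · rw [qStirling2_eq_zero_of_neg h, qStirling2_eq_zero_of_neg (by omega),
      qStirling2_eq_zero_of_neg (by omega)]
    ring
  · subst h
    rw [show ((0:ℤ)-1) = -1 from rfl, qStirling2_eq_zero_of_neg (show (-1:ℤ) < 0 by omega)]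
    simp only [mul_zero, zero_add, Int.toNat_zero]
    have : qint 0 = 0 := by simp [qint]
    rw [this, zero_mul]
    show qStirling2Nat (n+1) 0 = 0
    rfl
  · obtain ⟨t, rfl⟩ : ∃ t : ℕ, k = (t:ℤ)+1 := ⟨(k-1).toNat, by omega⟩
    have h1 : ((t:ℤ)+1-1).toNat = t := by omega
    have h2 : ((t:ℤ)+1).toNat = t+1 := by omega
    simp only [qStirling2, h1, h2, show (0:ℤ) ≤ (t:ℤ)+1 by omega, show (0:ℤ) ≤ (t:ℤ)+1-1 by omega,
      if_true, show ((t:ℤ)+1-1 : ℤ) = (t:ℤ) by ring, Int.le_refl, Int.ofNat_nonneg, Int.toNat_natCast]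
    rfl


lemma sc (r : ℕ) (k : ℤ) (i : ℕ) :
    X^r * (X ^ (k-1).toNat * qStirling2 i (k-1) + qint k.toNat * qStirling2 i k)
      + qint r * qStirling2 i k
    = X ^ (k + r - 1).toNat * qStirling2 i (k-1) + qint (k + r).toNat * qStirling2 i k := by
  rcases lt_trichotomy k 0 with h | h | h
  · rw [qStirling2_eq_zero_of_neg h, qStirling2_eq_zero_of_neg (show k - 1 < 0 by omega)]
    ring
  · subst h
    rw [qStirling2_eq_zero_of_neg (show (0:ℤ) - 1 < 0 by omega)]
    have h0 : qint (0:ℤ).toNat = 0 := by simp [qint]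
    rw [h0, show ((0:ℤ) + r).toNat = r by omega]
    ring
  · obtain ⟨t, rfl⟩ : ∃ t : ℕ, k = (t:ℤ)+1 := ⟨(k-1).toNat, by omega⟩
    rw [show ((t:ℤ)+1-1).toNat = t by omega, show ((t:ℤ)+1+r-1).toNat = t + r by omega,
      show ((t:ℤ)+1).toNat = t+1 by omega, show ((t:ℤ)+1+r).toNat = r + (t+1) by omega,
      qint_add r (t+1)]
    ring

lemma qrS_rec (r n : ℕ) (k : ℤ) :
    qrStirling2 r (n+1) k =
      X ^ (k + r - 1).toNat * qrStirling2 r n (k-1) + qint (k + r).toNat * qrStirling2 r n k := by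
  unfold qrStirling2
  rw [Finset.mul_sum, Finset.mul_sum, ← Finset.sum_add_distrib]
  rw [Finset.sum_range_succ' _ (n+1)]
  have hF : ∀ i ∈ range (n+1),
      X ^ ((i+1) * r) * (qint r) ^ (n + 1 - (i+1)) * (((n+1).choose (i+1) : ℕ) : Polynomial ℤ) *
        qStirling2 (i+1) k
      = (X ^ ((i+1) * r) * (qint r) ^ (n + 1 - (i+1)) * ((n.choose (i+1) : ℕ) : Polynomial ℤ) *
          qStirling2 (i+1) k)
        + X ^ (i * r) * (qint r) ^ (n - i) * ((n.choose i : ℕ) : Polynomial ℤ) *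
            (X^r * qStirling2 (i+1) k) := by
    intro i hi
    rw [Nat.choose_succ_succ, show n + 1 - (i+1) = n - i by omega, show (i+1)*r = i*r + r by ring,
      pow_add]
    push_cast
    ring
  rw [Finset.sum_congr rfl hF, Finset.sum_add_distrib]
  have hG : (∑ i ∈ range (n+1),
      X ^ ((i+1) * r) * (qint r) ^ (n + 1 - (i+1)) * ((n.choose (i+1) : ℕ) : Polynomial ℤ) *
        qStirling2 (i+1) k)
      + X ^ (0 * r) * (qint r) ^ (n + 1 - 0) * (((n+1).choose 0 : ℕ) : Polynomial ℤ) *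
          qStirling2 0 k
    = ∑ i ∈ range (n+1),
        qint r * (X ^ (i * r) * (qint r) ^ (n - i) * ((n.choose i : ℕ) : Polynomial ℤ) *
          qStirling2 i k) := by
    have : (∑ i ∈ range (n+1),
        X ^ ((i+1) * r) * (qint r) ^ (n + 1 - (i+1)) * ((n.choose (i+1) : ℕ) : Polynomial ℤ) *
          qStirling2 (i+1) k)
        + X ^ (0 * r) * (qint r) ^ (n + 1 - 0) * ((n.choose 0 : ℕ) : Polynomial ℤ) *
            qStirling2 0 k
      = ∑ i ∈ range (n+1+1),
          X ^ (i * r) * (qint r) ^ (n + 1 - i) * ((n.choose i : ℕ) : Polynomial ℤ) *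
            qStirling2 i k :=
        (Finset.sum_range_succ' (fun i => X ^ (i * r) * (qint r) ^ (n + 1 - i) *
          ((n.choose i : ℕ) : Polynomial ℤ) * qStirling2 i k) (n+1)).symm
    rw [show (((n+1).choose 0 : ℕ) : Polynomial ℤ) = ((n.choose 0 : ℕ) : Polynomial ℤ) by norm_num,
      this, Finset.sum_range_succ, Nat.choose_succ_self]
    simp only [Nat.cast_zero, mul_zero, zero_mul, add_zero]
    refine Finset.sum_congr rfl fun i hi => ?_
    rw [mem_range] at hi
    rw [show n + 1 - i = (n - i) + 1 by omega, pow_succ]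
    ring
  rw [add_right_comm, hG, ← Finset.sum_add_distrib]
  refine Finset.sum_congr rfl fun i hi => ?_
  rw [qS_rec i k]
  linear_combination (X ^ (i * r) * (qint r) ^ (n - i) * ((n.choose i : ℕ) : Polynomial ℤ)) *
    sc r k i


lemma qrStirling2_eq_zero {r m : ℕ} {l : ℤ} (h : l < 0 ∨ (m:ℤ) < l) : qrStirling2 r m l = 0 := by
  unfold qrStirling2
  apply Finset.sum_eq_zero
  intro i hi
  rw [mem_range] at hi
  rcases h with h | h
  · rw [qStirling2_eq_zero_of_neg h, mul_zero]
  · rw [qStirling2_eq_zero_of_gt (by push_cast; omega), mul_zero]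

lemma qStirling2_zero_left (k : ℤ) : qStirling2 0 k = if k = 0 then 1 else 0 := by
  unfold qStirling2
  split
  · rename_i h
    rcases Int.eq_ofNat_of_zero_le h with ⟨t, rfl⟩
    cases t with
    | zero => simp; rfl
    | succ t => simp; rfl
  · rename_i h
    rw [if_neg (by omega)]

lemma qrStirling2_zero_right (r' : ℕ) (k : ℤ) : qrStirling2 r' 0 k = qStirling2 0 k := by
  unfold qrStirling2
  simp

lemma qrStirling2_conv (r m : ℕ) : ∀ (n : ℕ) (l : ℤ),
    qrStirling2 r (m + n) l =
      ∑ j ∈ range (m+1), qrStirling2 r m (j:ℤ) * qrStirling2 (j + r) n (l - j) := by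
  intro n
  induction n with
  | zero =>
    intro l
    simp only [Nat.add_zero, qrStirling2_zero_right, qStirling2_zero_left]
    by_cases h : 0 ≤ l ∧ l ≤ (m:ℤ)
    · rw [Finset.sum_eq_single l.toNat]
      · rw [if_pos (by omega)]
        rw [show ((l.toNat : ℕ) : ℤ) = l by omega, mul_one]
      · intro j hj hne
        rw [if_neg (by rw [mem_range] at hj; omega), mul_zero]
      · intro hl
        rw [mem_range] at hl
        omega
    · rw [qrStirling2_eq_zero (by omega)]
      symm
      apply Finset.sum_eq_zero
      intro j hj
      rw [mem_range] at hj
      rw [if_neg (by omega), mul_zero]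
  | succ n ih =>
    intro l
    rw [show m + (n+1) = (m+n)+1 from rfl, qrS_rec, ih, ih]
    rw [Finset.mul_sum, Finset.mul_sum, ← Finset.sum_add_distrib]
    refine Finset.sum_congr rfl fun j hj => ?_
    rw [qrS_rec (j+r) n (l - j)]
    rw [show (l - (j:ℤ) + ((j:ℕ)+r : ℕ) - 1) = l + r - 1 by push_cast; ring,
      show (l - (j:ℤ) + ((j:ℕ)+r : ℕ)) = l + r by push_cast; ring,
      show l - (j:ℤ) - 1 = l - 1 - j by ring]
    ring

lemma sum_shift (m n i j : ℕ) (hi : i ≤ n) (hj : j ≤ m) :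
    ∑ l ∈ range (m+n+1), qStirling2 i ((l:ℤ) - j) = qBell i := by
  rw [qBell]
  have himg : ((range (i+1)).image (· + j)) ⊆ range (m+n+1) := by
    intro x hx
    simp only [mem_image, mem_range] at hx ⊢
    omega
  rw [← Finset.sum_subset himg (by
    intro x hx hnx
    simp only [mem_image, mem_range] at hx hnx
    rcases lt_or_ge x j with h | h
    · exact qStirling2_eq_zero_of_neg (by omega)
    · refine qStirling2_eq_zero_of_gt ?_
      have : ¬ (x - j < i + 1) := fun hc => hnx ⟨x - j, hc, by omega⟩
      push_cast
      omega)]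
  rw [Finset.sum_image (by intro a _ b _ h; simp only at h; omega)]
  refine Finset.sum_congr rfl fun k _ => ?_
  congr 1
  push_cast
  ring


theorem qrBell_add (m n r : ℕ) :
    qrBell r (m + n) =
      ∑ i ∈ range (n + 1), ∑ j ∈ range (m + 1),
        X ^ (i * (j + r)) * (qint (j + r)) ^ (n - i) * (n.choose i : Polynomial ℤ) *
          qrStirling2 r m (j : ℤ) * qBell i := by
  rw [qrBell]
  have step1 : ∀ l ∈ range (m+n+1),
      qrStirling2 r (m+n) ((l:ℕ) : ℤ) =
        ∑ j ∈ range (m+1), qrStirling2 r m (j:ℤ) * qrStirling2 (j + r) n ((l:ℤ) - j) :=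
    fun l _ => qrStirling2_conv r m n l
  rw [Finset.sum_congr rfl step1, Finset.sum_comm]
  conv_rhs => rw [Finset.sum_comm]
  refine Finset.sum_congr rfl fun j hj => ?_
  rw [mem_range] at hj
  have expand : ∀ l ∈ range (m+n+1),
      qrStirling2 r m (j:ℤ) * qrStirling2 (j + r) n ((l:ℤ) - j) =
        ∑ i ∈ range (n+1),
          (X ^ (i * (j + r)) * (qint (j + r)) ^ (n - i) * (n.choose i : Polynomial ℤ) *
            qrStirling2 r m (j:ℤ)) * qStirling2 i ((l:ℤ) - j) := by
    intro l _
    rw [show qrStirling2 (j+r) n ((l:ℤ)-j) = ∑ i ∈ range (n+1),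
        X ^ (i * (j+r)) * (qint (j+r)) ^ (n - i) * (n.choose i : Polynomial ℤ) *
          qStirling2 i ((l:ℤ)-j) from rfl, Finset.mul_sum]
    exact Finset.sum_congr rfl fun i _ => by ring
  rw [Finset.sum_congr rfl expand, Finset.sum_comm]
  refine Finset.sum_congr rfl fun i hi => ?_
  rw [mem_range] at hi
  rw [← Finset.mul_sum, sum_shift m n i j (by omega) (by omega)]
end

section
/- For all integers m, n, k ≥ 1: C(m+n-k, k) = Σ_{i=0}^{n} Σ_{j=0}^{m} β_{i,j} · (-1)^{i(j+1)} · C(n,i) · C(m-⌈j/2⌉, m-j) · C(i-k+⌈j/2⌉-1, i-2k+j), where β_{i,j} = χ(j is even) + χ(j is odd and i = n). -/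
open Finset

/-- Binomial coefficient with integer arguments: C(a,0) = 1 for every integer a, and
C(a,b) = 0 whenever b < 0 or 0 ≤ b ≤ a fails (for b > 0). -/
def C (a b : ℤ) : ℤ :=
  if b = 0 then 1 else if 0 ≤ b ∧ b ≤ a then (a.toNat.choose b.toNat : ℤ) else 0

lemma C_zero (a : ℤ) : C a 0 = 1 := by simp [C]

lemma C_neg {a b : ℤ} (h : b < 0) : C a b = 0 := by
  simp [C, h.ne, not_le.mpr h]

lemma C_of_lt {a b : ℤ} (hb : 0 < b) (h : a < b) : C a b = 0 := by
  simp [C, hb.ne', not_le.mpr h]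

lemma C_eq {a b : ℤ} (ha : 0 ≤ a) (hb : 0 ≤ b) :
    C a b = (a.toNat.choose b.toNat : ℤ) := by
  unfold C
  rcases eq_or_lt_of_le hb with h0 | h0
  · simp [← h0]
  · by_cases hab : b ≤ a
    · simp [h0.ne', hb, hab]
    · have : a.toNat < b.toNat := by omega
      simp [h0.ne', hb, hab, Nat.choose_eq_zero_of_lt this]

lemma C_pascal {a b : ℤ} (h : b = 1 → 1 ≤ a) :
    C a b = C (a - 1) b + C (a - 1) (b - 1) := by
  rcases lt_trichotomy b 0 with hb | hb | hb
  · rw [C_neg hb, C_neg hb, C_neg (by omega)]; ring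
  · subst hb; rw [C_zero, C_zero, C_neg (by omega)]; ring
  · by_cases ha : 1 ≤ a
    · rw [C_eq (by omega) (by omega), C_eq (by omega) (by omega),
        C_eq (by omega) (by omega)]
      have h1 : a.toNat = (a-1).toNat + 1 := by omega
      have h2 : b.toNat = (b-1).toNat + 1 := by omega
      rw [h1, h2, Nat.choose_succ_succ]
      push_cast; ring
    · have hb2 : 2 ≤ b := by
        rcases eq_or_lt_of_le (show (0:ℤ) + 1 ≤ b by omega) with h1 | h1
        · omega
        · by_contra hc; push_neg at hc
          have : b = 1 := by omega
          exact absurd (h this) (by omega)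
      rw [C_of_lt hb (by omega), C_of_lt hb (by omega), C_of_lt (by omega) (by omega)]
      ring

lemma C_symm {a b c : ℤ} (h : b + c = a) (hb : b = 0 → 0 ≤ a) (hc : c = 0 → 0 ≤ a) :
    C a b = C a c := by
  rcases lt_trichotomy a 0 with ha | ha | ha
  · have hb0 : b ≠ 0 := fun h' => absurd (hb h') (by omega)
    have hc0 : c ≠ 0 := fun h' => absurd (hc h') (by omega)
    rcases lt_trichotomy b 0 with h1 | h1 | h1
    · rw [C_neg h1]
      rcases lt_trichotomy c 0 with h2 | h2 | h2
      · rw [C_neg h2]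
      · omega
      · rw [C_of_lt h2 (by omega)]
    · omega
    · rw [C_of_lt h1 (by omega)]
      rcases lt_trichotomy c 0 with h2 | h2 | h2
      · rw [C_neg h2]
      · omega
      · rw [C_of_lt h2 (by omega)]
  all_goals {
    rcases lt_trichotomy b 0 with h1 | h1 | h1
    · rw [C_neg h1, C_of_lt (by omega) (by omega)]
    · rw [h1] at h ⊢; rw [C_zero]
      rw [C_eq (by omega) (by omega)]
      have : c.toNat = a.toNat := by omega
      rw [this, Nat.choose_self]; simp
    · rcases lt_trichotomy c 0 with h2 | h2 | h2
      · rw [C_neg h2, C_of_lt (by omega) (by omega)]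
      · rw [h2] at h ⊢
        rw [C_zero, C_eq (by omega) (by omega)]
        have : b.toNat = a.toNat := by omega
        rw [this, Nat.choose_self]; simp
      · rw [C_eq (by omega) (by omega), C_eq (by omega) (by omega)]
        have hba : b ≤ a := by omega
        have : a.toNat - b.toNat = c.toNat := by omega
        rw [← this, Nat.choose_symm (by omega)] }
def G (n : ℕ) (d : ℤ) : ℤ :=
  ∑ i ∈ range (n + 1), (-1) ^ i * (n.choose i : ℤ) * C ((i : ℤ) - d - 1) ((i : ℤ) - 2 * d)

def Ghat (n : ℕ) (d : ℤ) : ℤ :=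
  ∑ i ∈ range (n + 1), (-1) ^ i * (n.choose i : ℤ) * C ((i : ℤ) - d) ((i : ℤ) - 2 * d + 1)

lemma G_succ (n : ℕ) (d : ℤ) : G (n + 1) d = G n d - Ghat n d := by
  have key : G (n + 1) d =
      (∑ i ∈ range (n + 1), (-1) ^ (i+1) * (n.choose i : ℤ) * C ((i : ℤ) - d) ((i : ℤ) - 2 * d + 1))
      + (∑ i ∈ range (n + 1), (-1) ^ (i+1) * (n.choose (i+1) : ℤ) * C ((i : ℤ) - d) ((i : ℤ) - 2 * d + 1))
      + C (-d - 1) (-(2 * d)) := by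
    rw [G, Finset.sum_range_succ']
    rw [← Finset.sum_add_distrib]
    congr 1
    · apply Finset.sum_congr rfl
      intro i _
      push_cast [Nat.choose_succ_succ]
      rw [show ((i:ℤ) + 1 - d - 1) = (i:ℤ) - d by ring,
        show ((i:ℤ) + 1 - 2*d) = (i:ℤ) - 2*d + 1 by ring]
      ring
    · simp
  have third : (∑ i ∈ range (n + 1), (-1) ^ (i+1) * (n.choose (i+1) : ℤ) * C ((i : ℤ) - d) ((i : ℤ) - 2 * d + 1))
      = G n d - C (-d - 1) (-(2 * d)) := by
    have : G n d = (∑ i ∈ range (n + 1), (-1) ^ (i+1) * (n.choose (i+1) : ℤ) * C ((i : ℤ) - d) ((i : ℤ) - 2 * d + 1))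
        + C (-d - 1) (-(2 * d)) := by
      rw [G, Finset.sum_range_succ', Finset.sum_range_succ]
      simp [Nat.choose_succ_self]
      apply Finset.sum_congr rfl
      intro i _
      push_cast
      rw [show ((i:ℤ) + 1 - d - 1) = (i:ℤ) - d by ring,
        show ((i:ℤ) + 1 - 2*d) = (i:ℤ) - 2*d + 1 by ring]
    omega
  have second : (∑ i ∈ range (n + 1), (-1) ^ (i+1) * (n.choose i : ℤ) * C ((i : ℤ) - d) ((i : ℤ) - 2 * d + 1))
      = - Ghat n d := by
    rw [Ghat, ← Finset.sum_neg_distrib]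
    apply Finset.sum_congr rfl
    intro i _
    ring
  rw [key, second, third]; ring
lemma Ghat_succ (n : ℕ) (d : ℤ) : Ghat (n + 1) d = - G n (d - 1) := by
  have pas : ∀ i : ℕ, C ((i:ℤ) - d + 1) ((i:ℤ) - 2*d + 2)
      = C ((i:ℤ) - d) ((i:ℤ) - 2*d + 2) + C ((i:ℤ) - d) ((i:ℤ) - 2*d + 1) := by
    intro i
    have := C_pascal (a := (i:ℤ) - d + 1) (b := (i:ℤ) - 2*d + 2) (by intro h; omega)
    rw [show ((i:ℤ) - d + 1 - 1) = (i:ℤ) - d by ring,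
      show ((i:ℤ) - 2*d + 2 - 1) = (i:ℤ) - 2*d + 1 by ring] at this
    linarith [this]
  have key : Ghat (n + 1) d =
      (∑ i ∈ range (n + 1), (-1) ^ (i+1) * (n.choose i : ℤ) * C ((i : ℤ) - d + 1) ((i : ℤ) - 2 * d + 2))
      + (∑ i ∈ range (n + 1), (-1) ^ (i+1) * (n.choose (i+1) : ℤ) * C ((i : ℤ) - d + 1) ((i : ℤ) - 2 * d + 2))
      + C (-d) (-(2 * d) + 1) := by
    rw [Ghat, Finset.sum_range_succ']
    rw [← Finset.sum_add_distrib]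
    congr 1
    · apply Finset.sum_congr rfl
      intro i _
      push_cast [Nat.choose_succ_succ]
      rw [show ((i:ℤ) + 1 - d) = (i:ℤ) - d + 1 by ring,
        show ((i:ℤ) + 1 - 2*d + 1) = (i:ℤ) - 2*d + 2 by ring]
      ring
    · simp
  have second : (∑ i ∈ range (n + 1), (-1) ^ (i+1) * (n.choose i : ℤ) * C ((i : ℤ) - d + 1) ((i : ℤ) - 2 * d + 2))
      = - Ghat n d - G n (d - 1) := by
    have : ∀ i ∈ range (n+1), (-1:ℤ) ^ (i+1) * (n.choose i : ℤ) * C ((i : ℤ) - d + 1) ((i : ℤ) - 2 * d + 2)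
        = -((-1) ^ i * (n.choose i : ℤ) * C ((i : ℤ) - d) ((i : ℤ) - 2 * d + 1))
          + -((-1) ^ i * (n.choose i : ℤ) * C ((i : ℤ) - (d-1) - 1) ((i : ℤ) - 2 * (d-1))) := by
      intro i _
      rw [show ((i:ℤ) - (d-1) - 1) = (i:ℤ) - d by ring,
        show ((i:ℤ) - 2*(d-1)) = (i:ℤ) - 2*d + 2 by ring, pas i]
      ring
    rw [Finset.sum_congr rfl this, Finset.sum_add_distrib, Finset.sum_neg_distrib,
      Finset.sum_neg_distrib, Ghat, G]
    ring
  have third : (∑ i ∈ range (n + 1), (-1) ^ (i+1) * (n.choose (i+1) : ℤ) * C ((i : ℤ) - d + 1) ((i : ℤ) - 2 * d + 2))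
      = Ghat n d - C (-d) (-(2 * d) + 1) := by
    have : Ghat n d = (∑ i ∈ range (n + 1), (-1) ^ (i+1) * (n.choose (i+1) : ℤ) * C ((i : ℤ) - d + 1) ((i : ℤ) - 2 * d + 2))
        + C (-d) (-(2 * d) + 1) := by
      rw [Ghat, Finset.sum_range_succ', Finset.sum_range_succ]
      simp [Nat.choose_succ_self]
      apply Finset.sum_congr rfl
      intro i _
      push_cast
      rw [show ((i:ℤ) + 1 - d) = (i:ℤ) - d + 1 by ring,
        show ((i:ℤ) + 1 - 2*d + 1) = (i:ℤ) - 2*d + 2 by ring]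
    omega
  rw [key, second, third]; ring

lemma G_zero (d : ℤ) : G 0 d = C (0 - d) d := by
  rw [G, Finset.sum_range_one]
  norm_num
  rcases lt_trichotomy d 0 with hd | hd | hd
  · rw [C_of_lt (by omega) (by omega), C_neg hd]
  · subst hd; norm_num [C_zero]
  · rw [C_neg (by omega), C_of_lt hd (by omega)]

lemma Ghat_zero (d : ℤ) : Ghat 0 d = C (0 - d) (-(2*d) + 1) := by
  rw [Ghat, Finset.sum_range_one]
  norm_num

lemma G_closed : ∀ (n : ℕ) (d : ℤ), G n d = C ((n : ℤ) - d) d := by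
  intro n
  induction n using Nat.twoStepInduction with
  | zero => intro d; simpa using G_zero d
  | one =>
    intro d
    rw [G_succ, G_zero, Ghat_zero]
    have goal1 : ((1:ℕ):ℤ) - d = 1 - d := by norm_num
    rw [goal1]
    rcases lt_trichotomy d 0 with hd | hd | hd
    · rw [C_neg hd, C_of_lt (by omega) (by omega), C_neg hd]; ring
    · subst hd
      rw [C_zero, C_zero, C_of_lt (by omega) (by omega)]; ring
    · rcases eq_or_lt_of_le (by omega : (1:ℤ) ≤ d) with h1 | h1
      · rw [← h1]
        rw [C_of_lt (by omega) (by omega), C_neg (by omega), C_of_lt (by omega) (by omega)]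
        ring
      · rw [C_of_lt hd (by omega), C_neg (by omega), C_of_lt hd (by omega)]
        ring
  | more n ih1 ih2 =>
    intro d
    rw [G_succ, Ghat_succ, ih2, ih1, sub_neg_eq_add]
    have key := C_pascal (a := (n:ℤ) + 2 - d) (b := d) (by intro h; omega)
    rw [show ((n:ℤ) + 2 - d - 1) = (n:ℤ) + 1 - d by ring] at key
    have e1 : (((n:ℕ)+2:ℕ):ℤ) - d = ((n:ℤ)+2) - d := by push_cast; ring
    have e2 : (((n:ℕ)+1:ℕ):ℤ) - d = ((n:ℤ)+1) - d := by push_cast; ring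
    have e3 : ((n:ℤ)) - (d-1) = ((n:ℤ)+1) - d := by ring
    rw [e1, e2, e3, key]
def A (m : ℕ) (n k : ℤ) : ℤ :=
  ∑ t ∈ range (m + 1), C ((m : ℤ) - t) ((m : ℤ) - 2 * t) * C (n - k + t) (k - t)

def B (m : ℕ) (n k : ℤ) : ℤ :=
  ∑ t ∈ range (m + 1), C ((m : ℤ) - 1 - t) ((m : ℤ) - 1 - 2 * t) * C (n - k + t) (k - 1 - t)

lemma B_succ (m : ℕ) (n k : ℤ) : B (m + 1) n k = A m (n - 1) (k - 1) := by
  rw [B, A, Finset.sum_range_succ]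
  have last0 : C ((((m+1:ℕ)):ℤ) - 1 - ((m+1:ℕ):ℤ)) ((((m+1:ℕ)):ℤ) - 1 - 2*((m+1:ℕ):ℤ))
      * C (n - k + ((m+1:ℕ):ℤ)) (k - 1 - ((m+1:ℕ):ℤ)) = 0 := by
    rw [C_neg (show (((m+1:ℕ)):ℤ) - 1 - 2*((m+1:ℕ):ℤ) < 0 by push_cast; omega), zero_mul]
  rw [last0, add_zero]
  apply Finset.sum_congr rfl
  intro t _
  congr 1
  · congr 1 <;> push_cast <;> ring
  · congr 1 <;> push_cast <;> ring

lemma A_succ (m : ℕ) (n k : ℤ) : A (m + 1) n k = A m n k + B m (n + 1) k := by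
  have pas : ∀ t ∈ range (m + 1 + 1),
      C (((m+1:ℕ):ℤ) - (t:ℤ)) (((m+1:ℕ):ℤ) - 2 * t) * C (n - k + t) (k - t)
      = C ((m:ℤ) - t) ((m:ℤ) - 2 * t) * C (n - k + t) (k - t)
        + C ((m:ℤ) - t) ((m:ℤ) + 1 - 2 * t) * C (n - k + t) (k - t) := by
    intro t _
    rw [show ((m+1:ℕ):ℤ) - 2*(t:ℤ) = (m:ℤ) + 1 - 2*t by push_cast; ring]
    have key := C_pascal (a := ((m+1:ℕ):ℤ) - (t:ℤ)) (b := (m:ℤ) + 1 - 2 * t)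
      (by intro h; push_cast at h ⊢; omega)
    rw [show ((m+1:ℕ):ℤ) - (t:ℤ) - 1 = (m:ℤ) - t by push_cast; ring,
      show (m:ℤ) + 1 - 2*(t:ℤ) - 1 = (m:ℤ) - 2*t by ring] at key
    rw [key]
    ring
  rw [A, Finset.sum_congr rfl pas, Finset.sum_add_distrib]
  congr 1
  · rw [Finset.sum_range_succ, A]
    have : C ((m:ℤ) - ((m+1:ℕ):ℤ)) ((m:ℤ) - 2 * ((m+1:ℕ):ℤ)) * C (n - k + ((m+1:ℕ):ℤ)) (k - ((m+1:ℕ):ℤ)) = 0 := by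
      rw [C_neg (show (m:ℤ) - 2*((m+1:ℕ):ℤ) < 0 by push_cast; omega), zero_mul]
    rw [this, add_zero]
  · rw [Finset.sum_range_succ', B]
    have first0 : C ((m:ℤ) - ((0:ℕ):ℤ)) ((m:ℤ) + 1 - 2 * ((0:ℕ):ℤ)) * C (n - k + ((0:ℕ):ℤ)) (k - ((0:ℕ):ℤ)) = 0 := by
      rw [C_of_lt (show (0:ℤ) < (m:ℤ) + 1 - 2*((0:ℕ):ℤ) by push_cast; omega)
        (by push_cast; omega), zero_mul]
    rw [first0, add_zero]
    apply Finset.sum_congr rfl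
    intro t _
    congr 1
    · congr 1 <;> push_cast <;> ring
    · congr 1 <;> push_cast <;> ring

lemma AB_main : ∀ (m : ℕ) (n k : ℤ), 1 ≤ n → A m n k + B m n k = C ((m:ℤ) + n - k) k := by
  intro m
  induction m using Nat.twoStepInduction with
  | zero =>
    intro n k _
    rw [A, B, Finset.sum_range_one, Finset.sum_range_one]
    norm_num [C_zero]
    left
    exact C_neg (by omega)
  | one =>
    intro n k hn
    rw [A, B]
    rw [Finset.sum_range_succ, Finset.sum_range_one, Finset.sum_range_succ, Finset.sum_range_one]
    have h11 : C 1 1 = 1 := by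
      rw [C_eq (by omega) (by omega)]; decide
    have hneg1 : C 0 (-1) = 0 := C_neg (by omega)
    have hneg2 : C (-1) (-2) = 0 := C_neg (by omega)
    have key := C_pascal (a := 1 + n - k) (b := k) (by intro h; omega)
    rw [show (1:ℤ) + n - k - 1 = n - k by ring] at key
    norm_num [h11, hneg1, hneg2, C_zero, key]
  | more m ih1 ih2 =>
    intro n k hn
    have hB2 : B (m + 1 + 1) n k = A (m + 1) (n - 1) (k - 1) := B_succ _ _ _
    have hA2 : A (m + 1 + 1) n k = A (m + 1) n k + B (m + 1) (n + 1) k := A_succ _ _ _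
    have hB1 : B (m + 1) (n + 1) k = A m n (k - 1) := by
      rw [B_succ]; norm_num
    have hA1 : A (m + 1) (n - 1) (k - 1) = A m (n - 1) (k - 1) + B m n (k - 1) := by
      rw [A_succ]; norm_num
    have hB0 : B (m + 1) n k = A m (n - 1) (k - 1) := B_succ _ _ _
    have e1 := ih2 n k hn
    have e2 := ih1 n (k - 1) hn
    -- A(m+2)+B(m+2) = A(m+1) + B(m+1,n+1,k) + A(m+1,n-1,k-1)
    --              = A(m+1) + A(m,n,k-1) + A(m,n-1,k-1) + B(m,n,k-1)
    --              = A(m+1) + B(m+1,n,k) + A(m,n,k-1) + B(m,n,k-1)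
    rw [hA2, hB2, hA1, hB1]
    have : A (m+1) n k + A m n (k-1) + (A m (n-1) (k-1) + B m n (k-1))
        = (A (m+1) n k + B (m+1) n k) + (A m n (k-1) + B m n (k-1)) := by
      rw [hB0]; ring
    rw [this, e1, e2]
    have key := C_pascal (a := ((m+1+1:ℕ):ℤ) + n - k) (b := k) (by intro h; push_cast; omega)
    rw [show ((m+1+1:ℕ):ℤ) + n - k - 1 = ((m+1:ℕ):ℤ) + n - k by push_cast; ring] at key
    rw [key, show ((m:ℕ):ℤ) + n - (k-1) = ((m+1:ℕ):ℤ) + n - k by push_cast; ring]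
lemma G_def (n : ℕ) (d : ℤ) : G n d =
    ∑ i ∈ range (n + 1), (-1) ^ i * (n.choose i : ℤ) * C ((i : ℤ) - d - 1) ((i : ℤ) - 2 * d) := rfl

lemma sum_range_two_mul (M : ℕ) (f : ℕ → ℤ) :
    ∑ j ∈ range (2 * M), f j = ∑ t ∈ range M, (f (2 * t) + f (2 * t + 1)) := by
  induction M with
  | zero => simp
  | succ M ih =>
    rw [show 2 * (M + 1) = 2 * M + 1 + 1 by ring, Finset.sum_range_succ, Finset.sum_range_succ,
      ih, Finset.sum_range_succ]
    ring

def Pt (m n k i t : ℕ) : ℤ :=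
  (-1) ^ i * (n.choose i : ℤ) *
    (C ((m : ℤ) - t) ((m : ℤ) - 2 * t) * C ((i : ℤ) - k + t - 1) ((i : ℤ) - 2 * k + 2 * t))

def Qt (m n k i t : ℕ) : ℤ :=
  (if i = n then 1 else 0) * ((-1) ^ (i * (2 * t + 1 + 1)) * (n.choose i : ℤ) *
    (C ((m : ℤ) - 1 - t) ((m : ℤ) - 1 - 2 * t) *
      C ((i : ℤ) - k + t) ((i : ℤ) - 2 * k + (2 * t + 1))))

lemma even_sum (m n k : ℕ) :
    ∑ i ∈ range (n + 1), ∑ t ∈ range (m + 1), Pt m n k i t = A m (n : ℤ) (k : ℤ) := by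
  rw [Finset.sum_comm, A]
  apply Finset.sum_congr rfl
  intro t _
  have h1 : ∀ i ∈ range (n + 1), Pt m n k i t
      = C ((m:ℤ) - t) ((m:ℤ) - 2*t) *
        ((-1)^i * (n.choose i : ℤ) * C ((i:ℤ) - ((k:ℤ) - t) - 1) ((i:ℤ) - 2*((k:ℤ) - t))) := by
    intro i _
    rw [Pt, show (i:ℤ) - ((k:ℤ)-(t:ℤ)) - 1 = (i:ℤ) - k + t - 1 by ring,
      show (i:ℤ) - 2*((k:ℤ)-(t:ℤ)) = (i:ℤ) - 2*k + 2*t by ring]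
    ring
  rw [Finset.sum_congr rfl h1, ← Finset.mul_sum, ← G_def, G_closed,
    show (n:ℤ) - ((k:ℤ) - (t:ℤ)) = (n:ℤ) - k + t by ring]

lemma odd_sum (m n k : ℕ) (hn : 1 ≤ n) :
    ∑ i ∈ range (n + 1), ∑ t ∈ range (m + 1), Qt m n k i t = B m (n : ℤ) (k : ℤ) := by
  rw [Finset.sum_comm, B]
  apply Finset.sum_congr rfl
  intro t _
  calc ∑ i ∈ range (n + 1), Qt m n k i t
      = ∑ i ∈ range (n + 1), (if i = n then
          ((-1:ℤ) ^ (i * (2 * t + 1 + 1)) * (n.choose i : ℤ) *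
            (C ((m:ℤ) - 1 - t) ((m:ℤ) - 1 - 2*t) *
              C ((i:ℤ) - k + t) ((i:ℤ) - 2*k + (2*t + 1)))) else 0) := by
        apply Finset.sum_congr rfl
        intro i _
        rw [Qt, ite_mul, one_mul, zero_mul]
    _ = (-1:ℤ) ^ (n * (2 * t + 1 + 1)) * (n.choose n : ℤ) *
          (C ((m:ℤ) - 1 - t) ((m:ℤ) - 1 - 2*t) *
            C ((n:ℤ) - k + t) ((n:ℤ) - 2*k + (2*(t:ℕ) + 1))) := by
        rw [Finset.sum_ite_eq' (range (n + 1)) n]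
        simp [Finset.self_mem_range_succ]
    _ = C ((m:ℤ) - 1 - t) ((m:ℤ) - 1 - 2*t) * C ((n:ℤ) - k + t) ((k:ℤ) - 1 - t) := by
        rw [Nat.choose_self, show n * (2 * t + 1 + 1) = 2 * (n * (t + 1)) by ring, pow_mul,
          C_symm (show ((n:ℤ) - 2*k + (2*(t:ℕ) + 1)) + ((k:ℤ) - 1 - t) = (n:ℤ) - k + t by push_cast; ring)
            (by intro h; push_cast at h ⊢; omega) (by intro h; push_cast at h ⊢; omega)]
        norm_num

theorem binom_identity_3 (m n k : ℕ) (hm : 1 ≤ m) (hn : 1 ≤ n) (hk : 1 ≤ k) :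
    C ((m : ℤ) + n - k) (k : ℤ) =
      ∑ i ∈ range (n + 1), ∑ j ∈ range (m + 1),
        ((if Even j then 1 else 0) + (if Odd j ∧ i = n then 1 else 0) : ℤ) *
          (-1) ^ (i * (j + 1)) * (n.choose i : ℤ) *
          C ((m : ℤ) - ((j : ℤ) + 1) / 2) ((m : ℤ) - j) *
          C ((i : ℤ) - k + ((j : ℤ) + 1) / 2 - 1) ((i : ℤ) - 2 * k + j) := by
  have step1 : ∀ i ∈ range (n + 1),
      (∑ j ∈ range (m + 1),
        ((if Even j then 1 else 0) + (if Odd j ∧ i = n then 1 else 0) : ℤ) *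
          (-1) ^ (i * (j + 1)) * (n.choose i : ℤ) *
          C ((m : ℤ) - ((j : ℤ) + 1) / 2) ((m : ℤ) - j) *
          C ((i : ℤ) - k + ((j : ℤ) + 1) / 2 - 1) ((i : ℤ) - 2 * k + j))
      = ∑ t ∈ range (m + 1), (Pt m n k i t + Qt m n k i t) := by
    intro i _
    rw [Finset.sum_subset (Finset.range_subset_range.mpr (by omega : m + 1 ≤ 2 * (m + 1)))
      (by
        intro x _ hx
        rw [Finset.mem_range, not_lt] at hx
        rw [C_neg (show (m : ℤ) - (x : ℤ) < 0 by push_cast; omega), mul_zero, zero_mul])]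
    rw [sum_range_two_mul]
    apply Finset.sum_congr rfl
    intro t _
    congr 1
    · -- even term j = 2t
      have he : Even (2 * t) := even_two_mul t
      have ho : ¬ (Odd (2 * t) ∧ i = n) := by
        rintro ⟨h1, -⟩
        rw [Nat.odd_iff] at h1
        omega
      rw [if_pos he, if_neg ho,
        show (((2 * t : ℕ) : ℤ) + 1) / 2 = (t : ℤ) by push_cast; omega,
        show ((-1:ℤ)) ^ (i * (2 * t + 1)) = (-1) ^ i by
          rw [show i * (2 * t + 1) = 2 * (i * t) + i by ring, pow_add, pow_mul]; norm_num,
        show ((2 * t : ℕ) : ℤ) = 2 * (t : ℤ) by push_cast; ring, Pt]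
      ring
    · -- odd term j = 2t+1
      have he : ¬ Even (2 * t + 1) := by
        rw [Nat.even_iff]; omega
      have hcond : (if (Odd (2 * t + 1) ∧ i = n) then (1:ℤ) else 0) = (if i = n then 1 else 0) := by
        have hodd : Odd (2 * t + 1) := odd_two_mul_add_one t
        simp [hodd]
      rw [if_neg he, hcond,
        show (((2 * t + 1 : ℕ) : ℤ) + 1) / 2 = (t : ℤ) + 1 by push_cast; omega,
        show ((2 * t + 1 : ℕ) : ℤ) = 2 * (t : ℤ) + 1 by push_cast; ring,
        show (m:ℤ) - ((t:ℤ) + 1) = (m:ℤ) - 1 - t by ring,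
        show (m:ℤ) - (2 * (t:ℤ) + 1) = (m:ℤ) - 1 - 2*t by ring,
        show (i:ℤ) - k + ((t:ℤ) + 1) - 1 = (i:ℤ) - k + t by ring, Qt]
      push_cast
      ring
  rw [Finset.sum_congr rfl step1]
  simp only [Finset.sum_add_distrib]
  rw [_root_.even_sum, odd_sum m n k hn]
  exact (AB_main m (n:ℤ) (k:ℤ) (by exact_mod_cast hn)).symm
end
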